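/- Let (E, d) be a metric space and let A1, A2, A3 and B1, B2, B3 be nonempty bounded closed subsets of E with A1 ⊆ A2 ⊆ A3 and B1 ⊆ B2 ⊆ B3. Then the Hausdorff distance satisfies d_H(A2, B2) ≤ max{ d_H(A1, B3), d_H(A3, B1) }. -/

import Mathlib

theorem stmt_1 {E : Type*} [MetricSpace E] (A₁ A₂ A₃ B₁ B₂ B₃ : Set E)
    (hA₁ : A₁.Nonempty) (hA₂ : A₂.Nonempty) (hA₃ : A₃.Nonempty)
    (hB₁ : B₁.Nonempty) (hB₂ : B₂.Nonempty) (hB₃ : B₃.Nonempty)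
    (hbA₁ : Bornology.IsBounded A₁) (hbA₂ : Bornology.IsBounded A₂)
    (hbA₃ : Bornology.IsBounded A₃)
    (hbB₁ : Bornology.IsBounded B₁) (hbB₂ : Bornology.IsBounded B₂)
    (hbB₃ : Bornology.IsBounded B₃)
    (hclA₁ : IsClosed A₁) (hclA₂ : IsClosed A₂) (hclA₃ : IsClosed A₃)
    (hclB₁ : IsClosed B₁) (hclB₂ : IsClosed B₂) (hclB₃ : IsClosed B₃)
    (hA12 : A₁ ⊆ A₂) (hA23 : A₂ ⊆ A₃) (hB12 : B₁ ⊆ B₂) (hB23 : B₂ ⊆ B₃) :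
    Metric.hausdorffDist A₂ B₂ ≤ max (Metric.hausdorffDist A₁ B₃) (Metric.hausdorffDist A₃ B₁) := by
  have fin1 : EMetric.hausdorffEdist A₃ B₁ ≠ ⊤ :=
    Metric.hausdorffEdist_ne_top_of_nonempty_of_bounded hA₃ hB₁ hbA₃ hbB₁
  have fin2 : EMetric.hausdorffEdist A₁ B₃ ≠ ⊤ :=
    Metric.hausdorffEdist_ne_top_of_nonempty_of_bounded hA₁ hB₃ hbA₁ hbB₃
  apply Metric.hausdorffDist_le_of_infDist
  · exact le_trans Metric.hausdorffDist_nonneg (le_max_left _ _)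
  · intro x hx
    refine le_trans (le_trans (Metric.infDist_le_infDist_of_subset hB12 hB₁) ?_) (le_max_right _ _)
    exact Metric.infDist_le_hausdorffDist_of_mem (hA23 hx) fin1
  · intro x hx
    refine le_trans (le_trans (Metric.infDist_le_infDist_of_subset hA12 hA₁) ?_) (le_max_left _ _)
    rw [Metric.hausdorffDist_comm] at *
    exact Metric.infDist_le_hausdorffDist_of_mem (hB23 hx) (by rw [EMetric.hausdorffEdist_comm]; exact fin2)
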